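/- Let k ≥ 2 be an integer and define γ(k) = log 2 + Σ_{i=0}^∞ log(1 + 1/t'_k(i)^k)/k^(i+1), where t'_k(0) = 2 and t'_k(i+1) = t'_k(i)^k + 1. Then log 2 < γ(k) < log 2 + 1/(2^k (k−1)). In particular, γ(k) tends to log 2 from above as k → ∞. -/

import Mathlib

theorem stmt4 (t' : ℕ → ℕ → ℕ)
    (h0 : ∀ k, 2 ≤ k → t' k 0 = 2)
    (hrec : ∀ k, 2 ≤ k → ∀ i, t' k (i + 1) = t' k i ^ k + 1)
    (γ : ℕ → ℝ)
    (hγ : ∀ k, 2 ≤ k → γ k = Real.log 2 +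
      ∑' i : ℕ, Real.log (1 + 1 / (t' k i : ℝ) ^ k) / (k : ℝ) ^ (i + 1)) :
    (∀ k, 2 ≤ k → Real.log 2 < γ k ∧
      γ k < Real.log 2 + 1 / (2 ^ k * ((k : ℝ) - 1))) ∧
    Filter.Tendsto γ Filter.atTop (nhds (Real.log 2)) := by
  have key : ∀ k, 2 ≤ k → Real.log 2 < γ k ∧
      γ k < Real.log 2 + 1 / (2 ^ k * ((k : ℝ) - 1)) := by
    intro k hk
    have hk2 : (2:ℝ) ≤ (k:ℝ) := by exact_mod_cast hk
    have hkpos : (0:ℝ) < k := by linarith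
    -- t' k i ≥ 2
    have hT : ∀ i, 2 ≤ t' k i := by
      intro i
      induction i with
      | zero => simp [h0 k hk]
      | succ n ih =>
        rw [hrec k hk]
        have h1 : 2 ≤ 2 ^ k := by
          calc 2 = 2 ^ 1 := rfl
          _ ≤ 2 ^ k := Nat.pow_le_pow_right (by norm_num) (by omega)
        have h2 : 2 ^ k ≤ t' k n ^ k := Nat.pow_le_pow_left ih k
        omega
    set f : ℕ → ℝ := fun i => Real.log (1 + 1 / (t' k i : ℝ) ^ k) / (k : ℝ) ^ (i + 1)
      with hf
    set c : ℝ := 1 / 2 ^ k with hc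
    set r : ℝ := 1 / (k : ℝ) with hr
    have hcpos : 0 < c := by positivity
    have hrpos : 0 < r := by positivity
    have hrlt : r < 1 := by
      rw [hr, div_lt_one hkpos]; linarith
    set g : ℕ → ℝ := fun i => c * r ^ (i + 1) with hg
    have hTpos : ∀ i, (0:ℝ) < (t' k i : ℝ) := by
      intro i; have := hT i; positivity
    have hx_pos : ∀ i, (0:ℝ) < 1 / (t' k i : ℝ) ^ k := by
      intro i; have := hTpos i; positivity
    have hx_le : ∀ i, 1 / (t' k i : ℝ) ^ k ≤ c := by
      intro i
      rw [hc]
      have h2 : (2:ℝ) ≤ (t' k i : ℝ) := by exact_mod_cast hT i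
      have h3 : (2:ℝ)^k ≤ (t' k i:ℝ)^k := pow_le_pow_left₀ (by norm_num) h2 k
      exact one_div_le_one_div_of_le (by positivity) h3
    have hfpos : ∀ i, 0 < f i := by
      intro i
      apply div_pos
      · apply Real.log_pos
        have := hx_pos i; linarith
      · positivity
    have hlog_le : ∀ i, Real.log (1 + 1 / (t' k i : ℝ) ^ k) ≤ 1 / (t' k i : ℝ) ^ k := by
      intro i
      have h1 := Real.log_le_sub_one_of_pos (x := 1 + 1 / (t' k i : ℝ) ^ k)
        (by have := hx_pos i; linarith)
      linarith
    have hfg : ∀ i, f i ≤ g i := by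
      intro i
      have : g i = c / (k:ℝ) ^ (i+1) := by
        rw [hg, hr]
        simp [one_div, inv_pow, div_eq_mul_inv]
      rw [hf, this]
      exact div_le_div_of_nonneg_right ((hlog_le i).trans (hx_le i)) (by positivity) |>.trans_eq rfl
    have hgsum : Summable g := by
      have : Summable (fun i : ℕ => (c * r) * r ^ i) :=
        (summable_geometric_of_lt_one hrpos.le hrlt).mul_left _
      apply this.congr
      intro i
      rw [hg]; ring
    have hfsum : Summable f :=
      Summable.of_nonneg_of_le (fun i => (hfpos i).le) hfg hgsum
    have hSpos : 0 < ∑' i, f i := Summable.tsum_pos hfsum (fun i => (hfpos i).le) 0 (hfpos 0)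
    -- strict inequality at index 0
    have hT0 : (t' k 0 : ℝ) = 2 := by exact_mod_cast h0 k hk
    have hf0 : f 0 < g 0 := by
      have hx0 : 1 / (t' k 0 : ℝ) ^ k = c := by rw [hT0, hc]
      have hlt : Real.log (1 + c) < c := by
        have h1 := Real.log_lt_sub_one_of_pos (x := 1 + c) (by linarith) (by linarith)
        linarith
      have hg0 : g 0 = c / (k:ℝ) := by
        show c * r ^ (0+1) = c / (k:ℝ)
        rw [pow_one, hr]; ring
      have hf0' : f 0 = Real.log (1 + c) / (k:ℝ) := by
        show Real.log (1 + 1 / (t' k 0 : ℝ) ^ k) / (k : ℝ) ^ (0 + 1) = _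
        rw [hx0, pow_one]
      rw [hf0', hg0]
      exact (div_lt_div_iff_of_pos_right hkpos).mpr hlt
    have hSlt : ∑' i, f i < ∑' i, g i := Summable.tsum_lt_tsum hfg hf0 hfsum hgsum
    have hgval : ∑' i, g i = 1 / (2 ^ k * ((k : ℝ) - 1)) := by
      have h1 : ∑' i : ℕ, g i = ∑' i : ℕ, (c * r) * r ^ i := by
        apply tsum_congr; intro i; rw [hg]; ring
      rw [h1, tsum_mul_left, tsum_geometric_of_lt_one hrpos.le hrlt]
      rw [hc, hr]
      have hk1 : (k:ℝ) - 1 ≠ 0 := by intro h; nlinarith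
      have h2k : (2:ℝ) ^ k ≠ 0 := by positivity
      field_simp
    have hEq : (∑' i : ℕ, Real.log (1 + 1 / (t' k i : ℝ) ^ k) / (k : ℝ) ^ (i + 1))
        = ∑' i, f i := rfl
    constructor
    · rw [hγ k hk, hEq]; linarith
    · rw [hγ k hk, hEq]
      have := hSlt.trans_eq hgval
      linarith
  refine ⟨key, ?_⟩
  -- the limit
  have hzero : Filter.Tendsto (fun k : ℕ => 1 / (2 ^ k * ((k : ℝ) - 1)))
      Filter.atTop (nhds 0) := by
    have h1 : Filter.Tendsto (fun k : ℕ => ((k : ℝ) - 1)⁻¹) Filter.atTop (nhds 0) := by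
      apply Filter.Tendsto.inv_tendsto_atTop
      exact Filter.tendsto_atTop_add_const_right _ (-1) tendsto_natCast_atTop_atTop
    apply squeeze_zero' (g := fun k : ℕ => ((k : ℝ) - 1)⁻¹)
    · filter_upwards [Filter.eventually_ge_atTop 2] with k hk
      have h2 : (2:ℝ) ≤ (k:ℝ) := by exact_mod_cast hk
      have h3 : (0:ℝ) < (k:ℝ) - 1 := by linarith
      positivity
    · filter_upwards [Filter.eventually_ge_atTop 2] with k hk
      have hk2 : (2:ℝ) ≤ (k:ℝ) := by exact_mod_cast hk
      have h2k : (1:ℝ) ≤ 2 ^ k := one_le_pow₀ (by norm_num)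
      rw [one_div]
      apply inv_anti₀ (by linarith)
      nlinarith
    · exact h1
  have hup : Filter.Tendsto (fun k : ℕ => Real.log 2 + 1 / (2 ^ k * ((k : ℝ) - 1)))
      Filter.atTop (nhds (Real.log 2)) := by
    have := Filter.Tendsto.const_add (Real.log 2) hzero
    simpa using this
  apply tendsto_of_tendsto_of_tendsto_of_le_of_le' (tendsto_const_nhds) hup
  · filter_upwards [Filter.eventually_ge_atTop 2] with k hk
    exact (key k hk).1.le
  · filter_upwards [Filter.eventually_ge_atTop 2] with k hk
    exact (key k hk).2.le
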